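/- Define g₁(a,b,c) = (8/9)(a² − 2√2·ac + 2c²), g₄(a,b,c) = (2/3)(3a² + 2√3·ab + b²), and h(θ) = (cos θ + √3·sin θ + √(10 − cos(2θ) + √3·sin(2θ)))/(2√2). Then for every θ ∈ [0, π/3], setting φ = 2·arctan(h(θ)), one has g₁(cos θ sin φ, sin θ sin φ, cos φ) = g₄(cos θ sin φ, sin θ sin φ, cos φ). In particular, 2·arctan(h(0)) = 2·arctan(√2) and 2·arctan(h(π/3)) = 2·arctan((1 + √3)/√2). -/

import Mathlib

open Real

/-- First term of the maximum defining the squared-width function of the regular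
tetrahedron: `g₁(a,b,c) = (8/9)(a² − 2√2·ac + 2c²)`. -/
noncomputable def g₁ (a b c : ℝ) : ℝ :=
  (8/9) * (a ^ 2 - 2 * Real.sqrt 2 * a * c + 2 * c ^ 2)

/-- Fourth term of the maximum defining the squared-width function of the regular
tetrahedron: `g₄(a,b,c) = (2/3)(3a² + 2√3·ab + b²)`. -/
noncomputable def g₄ (a b c : ℝ) : ℝ :=
  (2/3) * (3 * a ^ 2 + 2 * Real.sqrt 3 * a * b + b ^ 2)

/-- `h(θ) = (cos θ + √3 sin θ + √(10 − cos 2θ + √3 sin 2θ)) / (2√2)`. -/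
noncomputable def h (θ : ℝ) : ℝ :=
  (Real.cos θ + Real.sqrt 3 * Real.sin θ +
    Real.sqrt (10 - Real.cos (2 * θ) + Real.sqrt 3 * Real.sin (2 * θ))) / (2 * Real.sqrt 2)

lemma sin_two_arctan' (t : ℝ) : Real.sin (2 * Real.arctan t) = 2 * t / (1 + t ^ 2) := by
  have h1 : (0:ℝ) < 1 + t ^ 2 := by positivity
  have h2 := Real.mul_self_sqrt h1.le
  have h3 : Real.sqrt (1 + t ^ 2) ≠ 0 := by positivity
  rw [Real.sin_two_mul, Real.sin_arctan, Real.cos_arctan]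
  field_simp
  rw [Real.sq_sqrt h1.le]

lemma cos_two_arctan' (t : ℝ) : Real.cos (2 * Real.arctan t) = (1 - t ^ 2) / (1 + t ^ 2) := by
  have h1 : (0:ℝ) < 1 + t ^ 2 := by positivity
  rw [Real.cos_two_mul, Real.cos_arctan, div_pow, Real.sq_sqrt h1.le]
  field_simp
  ring

lemma key_alg (t c s x y : ℝ) (hx : x ^ 2 = 2) (hy : y ^ 2 = 3)
    (hP : 2 * t ^ 2 - x * (c + y * s) * t - 2 = 0) :
    (8/9) * ((c * (2 * t / (1 + t ^ 2))) ^ 2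
        - 2 * x * (c * (2 * t / (1 + t ^ 2))) * ((1 - t ^ 2) / (1 + t ^ 2))
        + 2 * ((1 - t ^ 2) / (1 + t ^ 2)) ^ 2)
      = (2/3) * (3 * (c * (2 * t / (1 + t ^ 2))) ^ 2
        + 2 * y * (c * (2 * t / (1 + t ^ 2))) * (s * (2 * t / (1 + t ^ 2)))
        + (s * (2 * t / (1 + t ^ 2))) ^ 2) := by
  have h1 : (1:ℝ) + t ^ 2 ≠ 0 := by positivity
  field_simp
  linear_combination (12:ℝ) * ((t^2 + (5*x*c + x*y*s)/2*t - 1) * hP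
    + ((1/2)*t^2*s^2*y^2 + 3*t^2*c*s*y + (5/2)*t^2*c^2)*hx + t^2*s^2*hy)

/-- The quadratic relation satisfied by `h θ`. -/
lemma h_quadratic (θ : ℝ) :
    2 * (h θ) ^ 2 - Real.sqrt 2 * (Real.cos θ + Real.sqrt 3 * Real.sin θ) * (h θ) - 2 = 0 := by
  set x := Real.sqrt 2 with hxdef
  set y := Real.sqrt 3 with hydef
  set c := Real.cos θ
  set s := Real.sin θ
  have hx : x ^ 2 = 2 := Real.sq_sqrt (by norm_num)
  have hy : y ^ 2 = 3 := Real.sq_sqrt (by norm_num)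
  have pyth : s ^ 2 + c ^ 2 = 1 := Real.sin_sq_add_cos_sq θ
  have hDval : 10 - Real.cos (2 * θ) + y * Real.sin (2 * θ)
      = 11 - 2 * c ^ 2 + 2 * y * c * s := by
    rw [Real.cos_two_mul, Real.sin_two_mul]; ring
  have hD0 : (0:ℝ) ≤ 11 - 2 * c ^ 2 + 2 * y * c * s := by
    nlinarith [sq_nonneg (y * c + s), sq_nonneg (y * c - s), sq_nonneg s, sq_nonneg c]
  set r := Real.sqrt (10 - Real.cos (2 * θ) + y * Real.sin (2 * θ)) with hrdef
  have hr2 : r ^ 2 = 11 - 2 * c ^ 2 + 2 * y * c * s := by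
    rw [hrdef, hDval, Real.sq_sqrt hD0]
  have hx0 : (0:ℝ) < x := Real.sqrt_pos.mpr (by norm_num)
  have heq : 2 * x * (h θ) = c + y * s + r := by
    rw [show h θ = (c + y * s + r) / (2 * x) from rfl]
    field_simp
  linear_combination ((2 * x * (h θ) - c - y * s + r)/4) * heq + (1/4) * hr2
    - (3/4) * pyth - (h θ)^2 * hx - (1/4) * s^2 * hy

/-- Along the curve `φ(θ) = 2 arctan (h θ)`, the terms `g₁` and `g₄` of the tetrahedral
squared-width function agree; in particular `φ(0) = 2 arctan √2` and
`φ(π/3) = 2 arctan ((1+√3)/√2)`. -/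
theorem tetra_boundary_curve :
    (∀ θ ∈ Set.Icc (0 : ℝ) (π / 3),
      g₁ (Real.cos θ * Real.sin (2 * Real.arctan (h θ)))
          (Real.sin θ * Real.sin (2 * Real.arctan (h θ)))
          (Real.cos (2 * Real.arctan (h θ)))
        = g₄ (Real.cos θ * Real.sin (2 * Real.arctan (h θ)))
            (Real.sin θ * Real.sin (2 * Real.arctan (h θ)))
            (Real.cos (2 * Real.arctan (h θ)))) ∧
    2 * Real.arctan (h 0) = 2 * Real.arctan (Real.sqrt 2) ∧
    2 * Real.arctan (h (π / 3)) = 2 * Real.arctan ((1 + Real.sqrt 3) / Real.sqrt 2) := by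
  have hx : (Real.sqrt 2) ^ 2 = 2 := Real.sq_sqrt (by norm_num)
  have hy : (Real.sqrt 3) ^ 2 = 3 := Real.sq_sqrt (by norm_num)
  have hx0 : (0:ℝ) < Real.sqrt 2 := Real.sqrt_pos.mpr (by norm_num)
  refine ⟨?_, ?_, ?_⟩
  · intro θ _
    simp only [g₁, g₄, sin_two_arctan' (h θ), cos_two_arctan' (h θ)]
    exact key_alg (h θ) (Real.cos θ) (Real.sin θ) _ _ hx hy (h_quadratic θ)
  · congr 2
    rw [show h 0 = (Real.cos 0 + Real.sqrt 3 * Real.sin 0 +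
        Real.sqrt (10 - Real.cos (2 * 0) + Real.sqrt 3 * Real.sin (2 * 0)))
        / (2 * Real.sqrt 2) from rfl]
    rw [show (10 - Real.cos (2 * 0) + Real.sqrt 3 * Real.sin (2 * 0) : ℝ) = 9 by norm_num]
    rw [show (9:ℝ) = 3 ^ 2 by norm_num, Real.sqrt_sq (by norm_num : (0:ℝ) ≤ 3)]
    rw [Real.cos_zero, Real.sin_zero]
    rw [div_eq_iff (by positivity)]
    linear_combination (-2) * hx
  · congr 2
    rw [show h (π/3) = (Real.cos (π/3) + Real.sqrt 3 * Real.sin (π/3) +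
        Real.sqrt (10 - Real.cos (2 * (π/3)) + Real.sqrt 3 * Real.sin (2 * (π/3))))
        / (2 * Real.sqrt 2) from rfl]
    have hc : Real.cos (π/3) = 1/2 := Real.cos_pi_div_three
    have hs : Real.sin (π/3) = Real.sqrt 3 / 2 := Real.sin_pi_div_three
    have hc2 : Real.cos (2 * (π/3)) = -(1/2) := by
      rw [Real.cos_two_mul, hc]; norm_num
    have hs2 : Real.sin (2 * (π/3)) = Real.sqrt 3 / 2 := by
      rw [Real.sin_two_mul, hs, hc]; ring
    have hD : 10 - Real.cos (2 * (π/3)) + Real.sqrt 3 * Real.sin (2 * (π/3)) = 12 := by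
      rw [hc2, hs2]
      linear_combination (1/2) * hy
    rw [hD, hc, hs]
    have h12 : Real.sqrt 12 = 2 * Real.sqrt 3 := by
      rw [show (12:ℝ) = 2^2 * 3 by norm_num, Real.sqrt_mul (by positivity),
        Real.sqrt_sq (by norm_num : (0:ℝ) ≤ 2)]
    rw [h12]
    rw [div_eq_div_iff (by positivity) (by positivity)]
    linear_combination (Real.sqrt 2 / 2) * hy
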